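/- (Corollary 2, min–max version.) Let s₀ ∈ E and assume x⁺ i ≠ x⁻ j for all indices i, j. With ρ̄(s₀, x⁺ i, x⁻ j) = (β_j − ‖s₀ − x⁻ j‖² + ‖s₀ − x⁺ i‖²) / (2 * ‖x⁻ j − x⁺ i‖), define r_u* = min over i of (max over j of ρ̄(s₀, x⁺ i, x⁻ j)). Then every point in the open Euclidean ball of radius r_u* around s₀ is free: for all x ∈ E with ‖x − s₀‖ < r_u*, F(x) < 0. Moreover, for every fixed index j₀, the radius r_u = min over i of ρ̄(s₀, x⁺ i, x⁻ j₀) satisfies r_u ≤ r_u*, so the ball B(s₀, r_u) is contained in B(s₀, r_u*). -/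

import Mathlib

open scoped BigOperators

/-- Corollary 2 (min–max version): every point of the open ball of radius
`r_u* = min_i max_j ρ̄(s₀, x⁺ i, x⁻ j)` around `s₀` is free, and for every fixed `j₀`
the radius `r_u = min_i ρ̄(s₀, x⁺ i, x⁻ j₀)` satisfies `r_u ≤ r_u*`. -/
theorem ball_free_ru_star
    (d Mp Mm : ℕ) (hd : 0 < d) (hMp : 0 < Mp) (hMm : 0 < Mm)
    (η γ : ℝ) (hη : 0 < η) (hγ : 0 < γ)
    (xp : Fin Mp → EuclideanSpace ℝ (Fin d)) (αp : Fin Mp → ℝ) (hαp : ∀ i, 0 < αp i)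
    (xm : Fin Mm → EuclideanSpace ℝ (Fin d)) (αm : Fin Mm → ℝ) (hαm : ∀ j, 0 < αm j)
    (k : EuclideanSpace ℝ (Fin d) → EuclideanSpace ℝ (Fin d) → ℝ)
    (hk : ∀ x y, k x y = η * Real.exp (-γ * ‖x - y‖ ^ 2))
    (F : EuclideanSpace ℝ (Fin d) → ℝ)
    (hF : ∀ x, F x = (∑ i, αp i * k (xp i) x) - (∑ j, αm j * k (xm j) x))
    (β : Fin Mm → ℝ)
    (hβ : ∀ j, β j = (1 / γ) * (Real.log (αm j) - Real.log (∑ i, αp i)))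
    (s₀ : EuclideanSpace ℝ (Fin d))
    (hne : ∀ i j, xp i ≠ xm j)
    (ρbar : Fin Mp → Fin Mm → ℝ)
    (hρbar : ∀ i j, ρbar i j =
      (β j - ‖s₀ - xm j‖ ^ 2 + ‖s₀ - xp i‖ ^ 2) / (2 * ‖xm j - xp i‖))
    (ruStar : ℝ)
    (hruStar : ruStar = ⨅ i, ⨆ j, ρbar i j) :
    (∀ x : EuclideanSpace ℝ (Fin d), ‖x - s₀‖ < ruStar → F x < 0) ∧
      (∀ j₀ : Fin Mm, (⨅ i, ρbar i j₀) ≤ ruStar) := by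

  haveI : Nonempty (Fin Mp) := ⟨⟨0, hMp⟩⟩
  haveI : Nonempty (Fin Mm) := ⟨⟨0, hMm⟩⟩
  have hS : 0 < ∑ i, αp i := Finset.sum_pos (fun i _ => hαp i) Finset.univ_nonempty
  have key : ∀ (x : EuclideanSpace ℝ (Fin d)) (i : Fin Mp) (j : Fin Mm),
      ‖x - s₀‖ < ρbar i j → (∑ i, αp i) * k (xp i) x < αm j * k (xm j) x := by
    intro x i j hlt
    have hD : 0 < ‖xm j - xp i‖ := by
      rw [norm_pos_iff, sub_ne_zero]; exact (hne i j).symm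
    have h1 : ‖x - s₀‖ * (2 * ‖xm j - xp i‖) <
        β j - ‖s₀ - xm j‖ ^ 2 + ‖s₀ - xp i‖ ^ 2 := by
      rw [hρbar, lt_div_iff₀ (by positivity)] at hlt
      exact hlt
    -- expand the squared norms
    have hxm : x - xm j = (x - s₀) + (s₀ - xm j) := by abel
    have hxp : x - xp i = (x - s₀) + (s₀ - xp i) := by abel
    have ea : ‖x - xm j‖ ^ 2 = ‖x - s₀‖ ^ 2 + 2 * inner ℝ (x - s₀) (s₀ - xm j) + ‖s₀ - xm j‖ ^ 2 := by
      rw [hxm]; exact norm_add_sq_real _ _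
    have eb : ‖x - xp i‖ ^ 2 = ‖x - s₀‖ ^ 2 + 2 * inner ℝ (x - s₀) (s₀ - xp i) + ‖s₀ - xp i‖ ^ 2 := by
      rw [hxp]; exact norm_add_sq_real _ _
    have cs : inner ℝ (x - s₀) ((s₀ - xm j) - (s₀ - xp i)) ≤ ‖x - s₀‖ * ‖xm j - xp i‖ := by
      have := real_inner_le_norm (x - s₀) ((s₀ - xm j) - (s₀ - xp i))
      have hn : ‖(s₀ - xm j) - (s₀ - xp i)‖ = ‖xm j - xp i‖ := by
        rw [show (s₀ - xm j) - (s₀ - xp i) = xp i - xm j by abel, norm_sub_rev]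
      rw [hn] at this; exact this
    have hinner : inner ℝ (x - s₀) ((s₀ - xm j) - (s₀ - xp i))
        = (inner ℝ (x - s₀) (s₀ - xm j) : ℝ) - inner ℝ (x - s₀) (s₀ - xp i) := by
      rw [inner_sub_right]
    have hexp : ‖x - xm j‖ ^ 2 - ‖x - xp i‖ ^ 2 < β j := by nlinarith
    have hlog : Real.log (∑ i, αp i) - γ * ‖x - xp i‖ ^ 2 <
        Real.log (αm j) - γ * ‖x - xm j‖ ^ 2 := by
      have hb := hβ j
      have hγ' : γ ≠ 0 := ne_of_gt hγ
      have : γ * (‖x - xm j‖ ^ 2 - ‖x - xp i‖ ^ 2) < γ * β j :=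
        mul_lt_mul_of_pos_left hexp hγ
      rw [hb] at this
      field_simp at this
      linarith
    have hE := Real.exp_lt_exp.mpr hlog
    rw [Real.exp_sub, Real.exp_sub, Real.exp_log hS, Real.exp_log (hαm j)] at hE
    have hkp : k (xp i) x = η * Real.exp (-γ * ‖x - xp i‖ ^ 2) := by
      rw [hk, norm_sub_rev]
    have hkm : k (xm j) x = η * Real.exp (-γ * ‖x - xm j‖ ^ 2) := by
      rw [hk, norm_sub_rev]
    have hE2 : (∑ i, αp i) * Real.exp (-γ * ‖x - xp i‖ ^ 2) <
        αm j * Real.exp (-γ * ‖x - xm j‖ ^ 2) := by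
      rw [neg_mul, Real.exp_neg, neg_mul, Real.exp_neg,
        ← div_eq_mul_inv, ← div_eq_mul_inv]
      exact hE
    rw [hkp, hkm]
    calc (∑ i, αp i) * (η * Real.exp (-γ * ‖x - xp i‖ ^ 2))
        = η * ((∑ i, αp i) * Real.exp (-γ * ‖x - xp i‖ ^ 2)) := by ring
      _ < η * (αm j * Real.exp (-γ * ‖x - xm j‖ ^ 2)) := mul_lt_mul_of_pos_left hE2 hη
      _ = αm j * (η * Real.exp (-γ * ‖x - xm j‖ ^ 2)) := by ring
  constructor
  · intro x hx
    have hT : ∀ j, 0 ≤ αm j * k (xm j) x := by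
      intro j
      have : 0 ≤ k (xm j) x := by rw [hk]; positivity
      exact mul_nonneg (hαm j).le this
    have hsum : ∑ i, αp i * k (xp i) x < ∑ j, αm j * k (xm j) x := by
      set T := ∑ j, αm j * k (xm j) x with hTdef
      have step : ∀ i : Fin Mp, αp i * k (xp i) x < (αp i / (∑ i, αp i)) * T := by
        intro i
        obtain ⟨jm, hjm⟩ := Finite.exists_max (fun j => ρbar i j)
        have hle : ruStar ≤ ρbar i jm := by
          rw [hruStar]
          refine le_trans (ciInf_le (Finite.bddBelow_range _) i) ?_
          exact ciSup_le hjm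
        have hk1 := key x i jm (lt_of_lt_of_le hx hle)
        have hk2 : αm jm * k (xm jm) x ≤ T := by
          rw [hTdef]
          exact Finset.single_le_sum (fun j _ => hT j) (Finset.mem_univ jm)
        have hkx : 0 ≤ k (xp i) x := by rw [hk]; positivity
        have h3 : (∑ i, αp i) * k (xp i) x < T := lt_of_lt_of_le hk1 hk2
        rw [div_mul_eq_mul_div, lt_div_iff₀ hS]
        calc αp i * k (xp i) x * (∑ i, αp i) = αp i * ((∑ i, αp i) * k (xp i) x) := by ring
        _ < αp i * T := by exact mul_lt_mul_of_pos_left h3 (hαp i)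
      calc ∑ i, αp i * k (xp i) x < ∑ i, (αp i / (∑ i, αp i)) * T :=
            Finset.sum_lt_sum_of_nonempty Finset.univ_nonempty (fun i _ => step i)
        _ = T := by rw [← Finset.sum_mul, ← Finset.sum_div, div_self (ne_of_gt hS), one_mul]
    rw [hF]; linarith
  · intro j₀
    rw [hruStar]
    exact ciInf_mono (Finite.bddBelow_range _)
      (fun i => le_ciSup (Finite.bddAbove_range _) j₀)
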